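/- arXiv:1611.00718 — 4 statements merged into one kernel-verified Lean document; each statement's English description precedes it below -/
import Mathlib

section
/- For every finite simple graph H, the homomorphism density functional t(H,·) is Lipschitz continuous with respect to the cut distance: for all graphons W and U, |t(H,W) − t(H,U)| ≤ |E(H)| · δ_□(W,U), where |E(H)| is the number of edges of H. -/
open MeasureTheory

attribute [local instance] MeasureTheory.Measure.Subtype.measureSpace

noncomputable section

/-- The unit interval `[0,1]` as a measure space (with Lebesgue measure). -/
abbrev unitI : Type := Set.Icc (0 : ℝ) 1

/-- A (labeled) graphon: a symmetric, measurable function `[0,1]² → [0,1]`. -/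
structure Graphon where
  toFun : unitI → unitI → ℝ
  measurable' : Measurable (Function.uncurry toFun)
  symm' : ∀ x y, toFun x y = toFun y x
  nonneg' : ∀ x y, 0 ≤ toFun x y
  le_one' : ∀ x y, toFun x y ≤ 1

/-- The cut distance between two (labeled) graphons: the infimum, over pairs of invertible
measure-preserving re-labelings `φ, ψ` of `[0,1]`, of the supremum over measurable sets
`S, T ⊆ [0,1]` of `|∫_{S×T} (W(φx,φy) - U(ψx,ψy))|`. -/
def cutDist (W U : Graphon) : ℝ :=
  ⨅ p : {p : (unitI ≃ᵐ unitI) × (unitI ≃ᵐ unitI) //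
      MeasurePreserving p.1 volume volume ∧ MeasurePreserving p.2 volume volume},
    ⨆ ST : {ST : Set unitI × Set unitI // MeasurableSet ST.1 ∧ MeasurableSet ST.2},
      |∫ q in ST.1.1 ×ˢ ST.1.2,
        (W.toFun (p.1.1 q.1) (p.1.1 q.2) - U.toFun (p.1.2 q.1) (p.1.2 q.2))|

/-- The index in `Fin n` of the pixel containing `x ∈ [0,1]`; for `x ∈ ((i-1)/n, i/n]`
this is `⌈n x⌉ - 1 = i - 1`, corresponding to the vertex labeled `i` in `{1, …, n}`. -/
def pixelIdx (n : ℕ) (hn : 0 < n) (x : unitI) : Fin n :=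
  ⟨min (n - 1) (⌈(n : ℝ) * x.1⌉₊ - 1), lt_of_le_of_lt (min_le_left _ _) (Nat.sub_lt hn one_pos)⟩

lemma measurable_pixelIdx (n : ℕ) (hn : 0 < n) : Measurable (pixelIdx n hn) := by
  have h1 : Measurable fun x : unitI => ⌈(n : ℝ) * x.1⌉₊ :=
    (Nat.measurable_ceil.comp (measurable_const.mul measurable_subtype_coe))
  exact (measurable_from_top (f := fun m : ℕ =>
    (⟨min (n - 1) (m - 1), lt_of_le_of_lt (min_le_left _ _) (Nat.sub_lt hn one_pos)⟩ : Fin n))).comp h1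

open scoped Classical in
/-- The pixel graphon of a finite simple graph `G` on vertex set `Fin n`. -/
def pixelGraphon {n : ℕ} (hn : 0 < n) (G : SimpleGraph (Fin n)) : Graphon where
  toFun x y := if G.Adj (pixelIdx n hn x) (pixelIdx n hn y) then 1 else 0
  measurable' := by
    apply Measurable.ite _ measurable_const measurable_const
    have : Measurable fun q : unitI × unitI => (pixelIdx n hn q.1, pixelIdx n hn q.2) :=
      ((measurable_pixelIdx n hn).comp measurable_fst).prodMk
        ((measurable_pixelIdx n hn).comp measurable_snd)
    exact this ((Set.toFinite {q : Fin n × Fin n | G.Adj q.1 q.2}).measurableSet)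
  symm' := by
    intro x y
    simp only [SimpleGraph.adj_comm]
  nonneg' := by intro x y; (try simp only []); split <;> norm_num
  le_one' := by intro x y; (try simp only []); split <;> norm_num

open scoped Classical in
/-- The homomorphism density `t(H, W)` of a finite simple graph `H` in a graphon `W`. -/
def homDensityG {k : ℕ} (H : SimpleGraph (Fin k)) (W : Graphon) : ℝ :=
  ∫ x : Fin k → unitI, ∏ e ∈ H.edgeFinset,
    Sym2.lift ⟨fun i j => W.toFun (x i) (x j), fun i j => W.symm' (x i) (x j)⟩ e

/-- The number of graph homomorphisms from `H` to `G`. -/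
def homCount {k n : ℕ} (H : SimpleGraph (Fin k)) (G : SimpleGraph (Fin n)) : ℕ :=
  Nat.card (H →g G)

/-- The homomorphism density `t(H, G) = hom(H, G) / n ^ k` of `H` in a graph `G` on `n` vertices. -/
def homDensity {k n : ℕ} (H : SimpleGraph (Fin k)) (G : SimpleGraph (Fin n)) : ℝ :=
  (homCount H G : ℝ) / (n : ℝ) ^ k

/-- The 4-cycle `C₄`. -/
def C4 : SimpleGraph (Fin 4) := SimpleGraph.cycleGraph 4

/-- The single edge `K₂`. -/
def K2 : SimpleGraph (Fin 2) := ⊤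


instance : IsProbabilityMeasure (volume : Measure unitI) where
  measure_univ := by
    rw [Measure.Subtype.volume_univ nullMeasurableSet_Icc, Real.volume_Icc, sub_zero,
      ENNReal.ofReal_one]

lemma bdd_integrable' {α : Type*} [MeasurableSpace α] (μ : Measure α) [IsFiniteMeasure μ]
    {f : α → ℝ} (hf : AEStronglyMeasurable f μ) {C : ℝ} (hC : ∀ x, |f x| ≤ C) :
    Integrable f μ := by
  refine Integrable.mono' (integrable_const C) hf ?_
  filter_upwards with x using by simpa [Real.norm_eq_abs] using hC x

lemma abs_integral_le {α : Type*} [MeasurableSpace α] (μ : Measure α) [IsFiniteMeasure μ]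
    (hμ : μ Set.univ ≤ 1) {f : α → ℝ} {C : ℝ} (hC : 0 ≤ C) (h : ∀ x, |f x| ≤ C) :
    |∫ x, f x ∂μ| ≤ C := by
  have h1 : ‖∫ x, f x ∂μ‖ ≤ C * (μ Set.univ).toReal :=
    norm_integral_le_of_norm_le_const (Filter.Eventually.of_forall fun x => by
      simpa [Real.norm_eq_abs] using h x)
  have h2 : (μ Set.univ).toReal ≤ 1 := by
    simpa using ENNReal.toReal_mono ENNReal.one_ne_top hμ
  calc |∫ x, f x ∂μ| ≤ C * (μ Set.univ).toReal := h1
    _ ≤ C * 1 := by exact mul_le_mul_of_nonneg_left h2 hC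
    _ = C := mul_one C

/-- key one-variable step -/
lemma step1 {α : Type*} [MeasurableSpace α] {μ : Measure α} [IsFiniteMeasure μ]
    {f h : α → ℝ} (hf : Measurable f) (hf0 : ∀ x, 0 ≤ f x) (hf1 : ∀ x, f x ≤ 1)
    (hh : Measurable h) {C : ℝ} (hhC : ∀ x, |h x| ≤ C) :
    ∃ S : Set α, MeasurableSet S ∧ |∫ x, f x * h x ∂μ| ≤ |∫ x in S, h x ∂μ| := by
  have key : ∀ h' : α → ℝ, Measurable h' → (∀ x, |h' x| ≤ C) →
      ∫ x, f x * h' x ∂μ ≤ ∫ x in {x | 0 ≤ h' x}, h' x ∂μ := by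
    intro h' hh' hC'
    have hS : MeasurableSet {x | 0 ≤ h' x} := measurableSet_le measurable_const hh'
    have hint : Integrable h' μ := bdd_integrable' μ hh'.aestronglyMeasurable hC'
    have hfh : Integrable (fun x => f x * h' x) μ :=
      bdd_integrable' μ (hf.mul hh').aestronglyMeasurable (C := C ⊔ 0) (fun x => by
        rcases le_or_gt 0 (h' x) with h0 | h0
        · rw [abs_of_nonneg (mul_nonneg (hf0 x) h0)]
          calc f x * h' x ≤ 1 * h' x := mul_le_mul_of_nonneg_right (hf1 x) h0
            _ = h' x := one_mul _
            _ ≤ |h' x| := le_abs_self _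
            _ ≤ C ⊔ 0 := le_sup_of_le_left (hC' x)
        · rw [abs_of_nonpos (mul_nonpos_of_nonneg_of_nonpos (hf0 x) h0.le)]
          calc -(f x * h' x) = f x * (-h' x) := by ring
            _ ≤ 1 * (-h' x) := mul_le_mul_of_nonneg_right (hf1 x) (by linarith)
            _ = -h' x := one_mul _
            _ ≤ |h' x| := neg_le_abs _
            _ ≤ C ⊔ 0 := le_sup_of_le_left (hC' x))
    rw [← integral_indicator hS]
    refine integral_mono hfh (hint.indicator hS) fun x => ?_
    by_cases hx : 0 ≤ h' x
    · have hx' : x ∈ {x | 0 ≤ h' x} := hx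
      rw [Set.indicator_of_mem hx']
      calc f x * h' x ≤ 1 * h' x := mul_le_mul_of_nonneg_right (hf1 x) hx
        _ = h' x := one_mul _
    · have hx' : x ∉ {x | 0 ≤ h' x} := hx
      rw [Set.indicator_of_notMem hx']
      push_neg at hx
      exact mul_nonpos_of_nonneg_of_nonpos (hf0 x) hx.le
  rcases le_or_gt 0 (∫ x, f x * h x ∂μ) with hpos | hneg
  · refine ⟨{x | 0 ≤ h x}, measurableSet_le measurable_const hh, ?_⟩
    rw [abs_of_nonneg hpos]
    exact (key h hh hhC).trans (le_abs_self _)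
  · refine ⟨{x | 0 ≤ -h x}, measurableSet_le measurable_const hh.neg, ?_⟩
    rw [abs_of_neg hneg]
    have := key (fun x => -h x) hh.neg (fun x => by simpa using hhC x)
    simp only [mul_neg, integral_neg] at this
    have h2 : -∫ x, f x * h x ∂μ ≤ -∫ x in {x | 0 ≤ -h x}, h x ∂μ := by linarith
    exact h2.trans (neg_le_abs _)

def cutSup (D : unitI × unitI → ℝ) : ℝ :=
  ⨆ ST : {ST : Set unitI × Set unitI // MeasurableSet ST.1 ∧ MeasurableSet ST.2},
    |∫ q in ST.1.1 ×ˢ ST.1.2, D q|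

lemma cutSup_bddAbove {D : unitI × unitI → ℝ} (hDb : ∀ q, |D q| ≤ 1) :
    BddAbove (Set.range fun ST : {ST : Set unitI × Set unitI //
      MeasurableSet ST.1 ∧ MeasurableSet ST.2} => |∫ q in ST.1.1 ×ˢ ST.1.2, D q|) := by
  refine ⟨1, ?_⟩
  rintro x ⟨ST, rfl⟩
  exact abs_integral_le _ (by simpa [Measure.restrict_apply_univ] using prob_le_one) zero_le_one hDb

lemma cutSup_nonneg {D : unitI × unitI → ℝ} (hDb : ∀ q, |D q| ≤ 1) : 0 ≤ cutSup D := by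
  have := le_ciSup (cutSup_bddAbove hDb)
    (⟨(∅, ∅), MeasurableSet.empty, MeasurableSet.empty⟩ :
      {ST : Set unitI × Set unitI // MeasurableSet ST.1 ∧ MeasurableSet ST.2})
  simpa [cutSup] using le_trans (abs_nonneg _) this

/-- Lemma A: the bilinear form is bounded by the cut sup. -/
lemma lemA {D : unitI × unitI → ℝ} (hD : Measurable D) (hDb : ∀ q, |D q| ≤ 1)
    {f g : unitI → ℝ} (hf : Measurable f) (hf0 : ∀ x, 0 ≤ f x) (hf1 : ∀ x, f x ≤ 1)
    (hg : Measurable g) (hg0 : ∀ x, 0 ≤ g x) (hg1 : ∀ x, g x ≤ 1) :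
    |∫ q : unitI × unitI, f q.1 * g q.2 * D q| ≤ cutSup D := by
  have hvol : (volume : Measure (unitI × unitI)) = Measure.prod volume volume := rfl
  have hDint : Integrable D volume := bdd_integrable' _ hD.aestronglyMeasurable hDb
  have hFmeas : Measurable fun q : unitI × unitI => f q.1 * g q.2 * D q :=
    ((hf.comp measurable_fst).mul (hg.comp measurable_snd)).mul hD
  have hFb : ∀ q, |f q.1 * g q.2 * D q| ≤ 1 := fun q => by
    rw [abs_mul, abs_mul]
    have := hDb q
    have h1 : |f q.1| ≤ 1 := abs_le.2 ⟨by linarith [hf0 q.1], hf1 q.1⟩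
    have h2 : |g q.2| ≤ 1 := abs_le.2 ⟨by linarith [hg0 q.2], hg1 q.2⟩
    exact mul_le_one₀ (mul_le_one₀ h1 (abs_nonneg _) h2) (abs_nonneg _) this
  have hFint : Integrable (fun q : unitI × unitI => f q.1 * g q.2 * D q) volume :=
    bdd_integrable' _ hFmeas.aestronglyMeasurable hFb
  set h : unitI → ℝ := fun x => ∫ y, g y * D (x, y) with hh_def
  have hGD : Measurable fun q : unitI × unitI => g q.2 * D q := (hg.comp measurable_snd).mul hD
  have hGDb : ∀ q : unitI × unitI, |g q.2 * D q| ≤ 1 := fun q => by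
    rw [abs_mul]
    exact mul_le_one₀ (abs_le.2 ⟨by linarith [hg0 q.2], hg1 q.2⟩) (abs_nonneg _) (hDb q)
  have hhmeas : Measurable h := hGD.stronglyMeasurable.integral_prod_right'.measurable
  have hhb : ∀ x, |h x| ≤ 1 := fun x =>
    abs_integral_le volume (le_of_eq measure_univ) zero_le_one (fun y => hGDb (x, y))
  have key1 : ∫ q : unitI × unitI, f q.1 * g q.2 * D q = ∫ x, f x * h x := by
    rw [hvol] at hFint
    rw [hvol, integral_prod _ hFint]
    refine integral_congr_ae (Filter.Eventually.of_forall fun x => ?_)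
    simp_rw [mul_assoc]
    rw [integral_const_mul]
  obtain ⟨S, hSm, hS⟩ := step1 (μ := volume) hf hf0 hf1 hhmeas hhb
  set h2 : unitI → ℝ := fun y => ∫ x in S, D (x, y) with hh2_def
  have hrS : (volume.restrict S) Set.univ ≤ 1 := by
    rw [Measure.restrict_apply_univ]
    exact prob_le_one
  have hswap : ∫ x in S, h x = ∫ y, g y * h2 y := by
    have hint2 : Integrable (Function.uncurry fun x y => g y * D (x, y))
        ((volume.restrict S).prod volume) := by
      refine bdd_integrable' _ (Measurable.aestronglyMeasurable ?_) (fun q => hGDb (q.1, q.2))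
      exact (hg.comp measurable_snd).mul (hD.comp (measurable_fst.prodMk measurable_snd))
    have := integral_integral_swap hint2
    rw [this]
    refine integral_congr_ae (Filter.Eventually.of_forall fun y => ?_)
    exact integral_const_mul _ _
  have hh2meas : Measurable h2 :=
    (hD.stronglyMeasurable.integral_prod_left' (μ := volume.restrict S)).measurable
  have hh2b : ∀ y, |h2 y| ≤ 1 := fun y =>
    abs_integral_le (volume.restrict S) hrS zero_le_one (fun x => hDb (x, y))
  obtain ⟨T, hTm, hT⟩ := step1 (μ := volume) hg hg0 hg1 hh2meas hh2b
  have hfinal : ∫ y in T, h2 y = ∫ q in S ×ˢ T, D q := by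
    have hDon : IntegrableOn D (S ×ˢ T) (Measure.prod volume volume) := by
      rw [← hvol]; exact hDint.integrableOn
    have e1 : ∫ q in S ×ˢ T, D q = ∫ x in S, ∫ y in T, D (x, y) := by
      rw [hvol]; exact setIntegral_prod D hDon
    have hint3 : Integrable (Function.uncurry fun x y => D (x, y))
        ((volume.restrict S).prod (volume.restrict T)) := by
      refine bdd_integrable' _ (Measurable.aestronglyMeasurable ?_) (fun q => hDb (q.1, q.2))
      exact hD.comp (measurable_fst.prodMk measurable_snd)
    have e2 := integral_integral_swap hint3
    rw [e1, e2]
  calc |∫ q : unitI × unitI, f q.1 * g q.2 * D q| = |∫ x, f x * h x| := by rw [key1]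
    _ ≤ |∫ x in S, h x| := hS
    _ = |∫ y, g y * h2 y| := by rw [hswap]
    _ ≤ |∫ y in T, h2 y| := hT
    _ = |∫ q in S ×ˢ T, D q| := by rw [hfinal]
    _ ≤ cutSup D := le_ciSup (cutSup_bddAbove hDb) ⟨(S, T), hSm, hTm⟩


section Split
variable {k : ℕ} (a b : Fin k) (hab : a ≠ b)

def e2 : Fin 2 ≃ {i : Fin k // i = a ∨ i = b} where
  toFun := fun j => if j = 0 then ⟨a, Or.inl rfl⟩ else ⟨b, Or.inr rfl⟩
  invFun := fun i => if i.1 = a then 0 else 1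
  left_inv := by intro j; fin_cases j <;> simp [hab.symm]
  right_inv := by rintro ⟨i, hi | hi⟩ <;> subst hi <;> simp [hab, hab.symm]

instance : DecidablePred (fun i : Fin k => i = a ∨ i = b) := fun _ =>
  inferInstanceAs (Decidable (_ ∨ _))

def splitEquiv : ((unitI × unitI) × ({i : Fin k // ¬(i = a ∨ i = b)} → unitI)) ≃ᵐ
    (Fin k → unitI) :=
  (MeasurableEquiv.prodCongr
    ((MeasurableEquiv.piFinTwo (fun _ : Fin 2 => unitI)).symm.trans
      (MeasurableEquiv.piCongrLeft (fun _ => unitI) (e2 a b hab)))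
    (MeasurableEquiv.refl _)).trans
    (MeasurableEquiv.piEquivPiSubtypeProd (fun _ : Fin k => unitI)
      (fun i => i = a ∨ i = b)).symm

lemma splitEquiv_measurePreserving :
    MeasurePreserving (splitEquiv a b hab) volume volume := by
  have h1 : MeasurePreserving
      (⇑(MeasurableEquiv.piEquivPiSubtypeProd (fun _ : Fin k => unitI)
        (fun i => i = a ∨ i = b)).symm) volume volume :=
    (volume_preserving_piEquivPiSubtypeProd (fun _ : Fin k => unitI) _).symm _
  have h2 : MeasurePreserving
      (⇑((MeasurableEquiv.piFinTwo (fun _ : Fin 2 => unitI)).symm.trans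
        (MeasurableEquiv.piCongrLeft (fun _ => unitI) (e2 a b hab)))) volume volume := by
    exact (volume_measurePreserving_piCongrLeft
      (fun _ : {i : Fin k // i = a ∨ i = b} => unitI) (e2 a b hab)).comp
      ((volume_preserving_piFinTwo (fun _ : Fin 2 => unitI)).symm _)
  have h3 : MeasurePreserving (Prod.map
      (⇑((MeasurableEquiv.piFinTwo (fun _ : Fin 2 => unitI)).symm.trans
        (MeasurableEquiv.piCongrLeft (fun _ => unitI) (e2 a b hab)))) id)
      volume volume := h2.prod (MeasurePreserving.id (volume : Measure ({i : Fin k // ¬(i = a ∨ i = b)} → unitI)))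
  exact h1.comp h3

lemma splitEquiv_apply_a (u v : unitI) (z : {i : Fin k // ¬(i = a ∨ i = b)} → unitI) :
    splitEquiv a b hab ((u, v), z) a = u := by
  simp [splitEquiv, MeasurableEquiv.piEquivPiSubtypeProd, MeasurableEquiv.piCongrLeft,
    MeasurableEquiv.prodCongr, MeasurableEquiv.piFinTwo, Equiv.piEquivPiSubtypeProd,
    Equiv.piCongrLeft, e2]

lemma splitEquiv_apply_b (u v : unitI) (z : {i : Fin k // ¬(i = a ∨ i = b)} → unitI) :
    splitEquiv a b hab ((u, v), z) b = v := by
  simp [splitEquiv, MeasurableEquiv.piEquivPiSubtypeProd, MeasurableEquiv.piCongrLeft,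
    MeasurableEquiv.prodCongr, MeasurableEquiv.piFinTwo, Equiv.piEquivPiSubtypeProd,
    Equiv.piCongrLeft, e2, hab.symm]

lemma splitEquiv_apply_rest (u v : unitI) (z : {i : Fin k // ¬(i = a ∨ i = b)} → unitI)
    (i : Fin k) (hi : ¬(i = a ∨ i = b)) :
    splitEquiv a b hab ((u, v), z) i = z ⟨i, hi⟩ := by
  simp [splitEquiv, MeasurableEquiv.piEquivPiSubtypeProd, MeasurableEquiv.piCongrLeft,
    MeasurableEquiv.prodCongr, MeasurableEquiv.piFinTwo, Equiv.piEquivPiSubtypeProd,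
    Equiv.piCongrLeft, e2, hi]
end Split

namespace Graphon
/-- Pullback of a graphon along a measurable self-equivalence of `[0,1]`. -/
def comp (W : Graphon) (fm : unitI ≃ᵐ unitI) : Graphon where
  toFun x y := W.toFun (fm x) (fm y)
  measurable' := W.measurable'.comp
    ((fm.measurable.comp measurable_fst).prodMk (fm.measurable.comp measurable_snd))
  symm' x y := W.symm' _ _
  nonneg' x y := W.nonneg' _ _
  le_one' x y := W.le_one' _ _
end Graphon

section Edges
variable {k : ℕ}

/-- The factor of the homomorphism-density integrand attached to one edge. -/
def edgeF (W : Graphon) (x : Fin k → unitI) (e : Sym2 (Fin k)) : ℝ :=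
  Sym2.lift ⟨fun i j => W.toFun (x i) (x j), fun i j => W.symm' (x i) (x j)⟩ e

lemma edgeF_nonneg (W : Graphon) (x : Fin k → unitI) (e : Sym2 (Fin k)) : 0 ≤ edgeF W x e := by
  induction e using Sym2.ind with
  | _ i j => simpa [edgeF] using W.nonneg' (x i) (x j)

lemma edgeF_le_one (W : Graphon) (x : Fin k → unitI) (e : Sym2 (Fin k)) : edgeF W x e ≤ 1 := by
  induction e using Sym2.ind with
  | _ i j => simpa [edgeF] using W.le_one' (x i) (x j)

lemma measurable_edgeF (W : Graphon) (e : Sym2 (Fin k)) :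
    Measurable fun x : Fin k → unitI => edgeF W x e := by
  induction e using Sym2.ind with
  | _ i j =>
    simp only [edgeF, Sym2.lift_mk]
    have h : Measurable fun x : Fin k → unitI => (x i, x j) :=
      (measurable_pi_apply i).prodMk (measurable_pi_apply j)
    exact (W.measurable'.comp h : Measurable fun x : Fin k → unitI => W.toFun (x i) (x j))

lemma edgeF_congr (W : Graphon) {x y : Fin k → unitI} {e : Sym2 (Fin k)}
    (h : ∀ i ∈ e, x i = y i) : edgeF W x e = edgeF W y e := by
  induction e using Sym2.ind with
  | _ i j =>
    simp only [edgeF, Sym2.lift_mk]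
    rw [h i (Sym2.mem_mk_left i j), h j (Sym2.mem_mk_right i j)]

/-- Product of edge factors over a finite set of edges. -/
def prodF (W : Graphon) (A : Finset (Sym2 (Fin k))) (x : Fin k → unitI) : ℝ :=
  ∏ e ∈ A, edgeF W x e

lemma prodF_nonneg (W : Graphon) (A : Finset (Sym2 (Fin k))) (x : Fin k → unitI) :
    0 ≤ prodF W A x := Finset.prod_nonneg fun e _ => edgeF_nonneg W x e

lemma prodF_le_one (W : Graphon) (A : Finset (Sym2 (Fin k))) (x : Fin k → unitI) :
    prodF W A x ≤ 1 :=
  Finset.prod_le_one (fun e _ => edgeF_nonneg W x e) (fun e _ => edgeF_le_one W x e)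

lemma measurable_prodF (W : Graphon) (A : Finset (Sym2 (Fin k))) :
    Measurable (prodF W A) := by
  unfold prodF
  exact Finset.measurable_prod A fun e _ => measurable_edgeF W e

lemma prodF_congr (W : Graphon) {A : Finset (Sym2 (Fin k))} {x y : Fin k → unitI}
    (h : ∀ e ∈ A, ∀ i ∈ e, x i = y i) : prodF W A x = prodF W A y :=
  Finset.prod_congr rfl fun e he => edgeF_congr W (h e he)

lemma abs_prodF_mul_le_one (W U : Graphon) (C C' : Finset (Sym2 (Fin k)))
    (x : Fin k → unitI) : |prodF W C x * prodF U C' x| ≤ 1 := by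
  rw [abs_of_nonneg (mul_nonneg (prodF_nonneg _ _ _) (prodF_nonneg _ _ _))]
  exact mul_le_one₀ (prodF_le_one _ _ _) (prodF_nonneg _ _ _) (prodF_le_one _ _ _)

/-- Invariance of homomorphism density under measure-preserving re-labeling. -/
lemma homDensityG_comp (H : SimpleGraph (Fin k)) (W : Graphon) (fm : unitI ≃ᵐ unitI)
    (hfm : MeasurePreserving fm volume volume) :
    homDensityG H (W.comp fm) = homDensityG H W := by
  classical
  have hmp : MeasurePreserving (⇑(MeasurableEquiv.piCongrRight fun _ : Fin k => fm))
      (volume : Measure (Fin k → unitI)) volume :=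
    volume_preserving_pi fun _ => hfm
  have hint := hmp.integral_comp
    (MeasurableEquiv.measurableEmbedding (MeasurableEquiv.piCongrRight fun _ : Fin k => fm))
    (prodF W H.edgeFinset)
  have h2 : homDensityG H W = ∫ x : Fin k → unitI, prodF W H.edgeFinset x := rfl
  show (∫ x : Fin k → unitI, prodF (W.comp fm) H.edgeFinset x) = _
  rw [h2, ← hint]
  rfl

end Edges

section Counting
variable {k : ℕ}

open scoped Classical in
/-- The hybrid integral used in the telescoping argument. -/
def TT (H : SimpleGraph (Fin k)) (W U : Graphon) (A : Finset (Sym2 (Fin k))) : ℝ :=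
  ∫ x : Fin k → unitI, prodF W A x * prodF U (H.edgeFinset \ A) x

/-- The difference kernel of two graphons. -/
def dK (W U : Graphon) : unitI × unitI → ℝ :=
  fun q => W.toFun q.1 q.2 - U.toFun q.1 q.2

lemma dK_measurable (W U : Graphon) : Measurable (dK W U) :=
  W.measurable'.sub U.measurable'

lemma dK_abs_le_one (W U : Graphon) : ∀ q, |dK W U q| ≤ 1 := fun q =>
  abs_le.2 ⟨by have h1 := W.nonneg' q.1 q.2; have h2 := U.le_one' q.1 q.2; simp only [dK]; linarith,
    by have h1 := W.le_one' q.1 q.2; have h2 := U.nonneg' q.1 q.2; simp only [dK]; linarith⟩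

open scoped Classical in
lemma step_edge (H : SimpleGraph (Fin k)) (W U : Graphon) (A : Finset (Sym2 (Fin k)))
    {e : Sym2 (Fin k)} (he : e ∈ H.edgeFinset) (heA : e ∉ A) :
    |TT H W U (insert e A) - TT H W U A| ≤ cutSup (dK W U) := by
  induction e using Sym2.ind with
  | _ a b =>
  have hadj : H.Adj a b := by
    rw [SimpleGraph.mem_edgeFinset, SimpleGraph.mem_edgeSet] at he
    exact he
  have hab : a ≠ b := hadj.ne
  set B := H.edgeFinset \ insert s(a, b) A with hB
  have hsd : H.edgeFinset \ A = insert s(a, b) B := by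
    rw [hB, Finset.sdiff_insert, Finset.insert_erase]
    exact Finset.mem_sdiff.2 ⟨he, heA⟩
  have hsB : s(a, b) ∉ B := by rw [hB]; simp
  set Aa := A.filter (fun e' => ¬ b ∈ e') with hAa
  set Ab := A.filter (fun e' => b ∈ e') with hAb
  set Ba := B.filter (fun e' => ¬ b ∈ e') with hBa
  set Bb := B.filter (fun e' => b ∈ e') with hBb
  have hb_only : ∀ e' : Sym2 (Fin k), e' ≠ s(a, b) → b ∈ e' → a ∉ e' := by
    intro e' hne hbe hae
    exact hne ((Sym2.mem_and_mem_iff hab).1 ⟨hae, hbe⟩)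
  have hAa_nb : ∀ e' ∈ Aa, b ∉ e' := fun e' h => (Finset.mem_filter.1 h).2
  have hBa_nb : ∀ e' ∈ Ba, b ∉ e' := fun e' h => (Finset.mem_filter.1 h).2
  have hAb_na : ∀ e' ∈ Ab, a ∉ e' := fun e' h => by
    rcases Finset.mem_filter.1 h with ⟨hmem, hbm⟩
    exact hb_only e' (by rintro rfl; exact heA hmem) hbm
  have hBb_na : ∀ e' ∈ Bb, a ∉ e' := fun e' h => by
    rcases Finset.mem_filter.1 h with ⟨hmem, hbm⟩
    rcases Finset.mem_sdiff.1 (hB ▸ hmem) with ⟨_, h2⟩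
    exact hb_only e' (by rintro rfl; exact h2 (Finset.mem_insert_self _ _)) hbm
  have hPsplit : ∀ x : Fin k → unitI,
      prodF W A x * prodF U B x =
        (prodF W Aa x * prodF U Ba x) * (prodF W Ab x * prodF U Bb x) := by
    intro x
    have h1 : prodF W Ab x * prodF W Aa x = prodF W A x := by
      rw [hAa, hAb]; unfold prodF
      exact Finset.prod_filter_mul_prod_filter_not A _ _
    have h2 : prodF U Bb x * prodF U Ba x = prodF U B x := by
      rw [hBa, hBb]; unfold prodF
      exact Finset.prod_filter_mul_prod_filter_not B _ _
    rw [← h1, ← h2]; ring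
  -- Step A : the difference as a single integral
  have hdiff : TT H W U (insert s(a, b) A) - TT H W U A
      = ∫ x : Fin k → unitI,
          (prodF W A x * prodF U B x) * (edgeF W x s(a, b) - edgeF U x s(a, b)) := by
    unfold TT
    rw [← hB, hsd, ← integral_sub
      (bdd_integrable' (f := fun x => prodF W _ x * prodF U _ x) _ (((measurable_prodF W _).mul (measurable_prodF U _)).aestronglyMeasurable)
        (abs_prodF_mul_le_one W U _ _))
      (bdd_integrable' (f := fun x => prodF W _ x * prodF U _ x) _ (((measurable_prodF W _).mul (measurable_prodF U _)).aestronglyMeasurable)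
        (abs_prodF_mul_le_one W U _ _))]
    refine integral_congr_ae (Filter.Eventually.of_forall fun x => ?_)
    show prodF W (insert s(a,b) A) x * prodF U B x
        - prodF W A x * prodF U (insert s(a,b) B) x = _
    unfold prodF
    rw [Finset.prod_insert heA, Finset.prod_insert hsB]
    ring
  -- the split equivalence
  have hmp := splitEquiv_measurePreserving a b hab
  set m := splitEquiv a b hab with hm
  set v0 : unitI := ⟨0, by constructor <;> norm_num⟩ with hv0
  set G : (Fin k → unitI) → ℝ := fun x =>
    (prodF W A x * prodF U B x) * (edgeF W x s(a, b) - edgeF U x s(a, b)) with hG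
  have hGm : Measurable G := by
    refine ((measurable_prodF W A).mul (measurable_prodF U B)).mul ?_
    exact (measurable_edgeF W _).sub (measurable_edgeF U _)
  have hGb : ∀ x, |G x| ≤ 1 := by
    intro x
    rw [hG, abs_mul]
    refine mul_le_one₀ (abs_prodF_mul_le_one W U _ _ x) (abs_nonneg _) (abs_le.2 ⟨?_, ?_⟩)
    · have := edgeF_nonneg W x s(a,b); have := edgeF_le_one U x s(a,b); linarith
    · have := edgeF_le_one W x s(a,b); have := edgeF_nonneg U x s(a,b); linarith
  -- agreement lemmas
  have hAgree_b : ∀ (u v v' : unitI) z (i : Fin k), i ≠ b →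
      m ((u, v), z) i = m ((u, v'), z) i := by
    intro u v v' z i hib
    by_cases hia : i = a
    · subst hia
      rw [hm, splitEquiv_apply_a, splitEquiv_apply_a]
    · have hni : ¬(i = a ∨ i = b) := by tauto
      rw [hm, splitEquiv_apply_rest a b hab u v z i hni,
        splitEquiv_apply_rest a b hab u v' z i hni]
  have hAgree_a : ∀ (u u' v : unitI) z (i : Fin k), i ≠ a →
      m ((u, v), z) i = m ((u', v), z) i := by
    intro u u' v z i hia
    by_cases hib : i = b
    · subst hib
      rw [hm, splitEquiv_apply_b, splitEquiv_apply_b]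
    · have hni : ¬(i = a ∨ i = b) := by tauto
      rw [hm, splitEquiv_apply_rest a b hab u v z i hni,
        splitEquiv_apply_rest a b hab u' v z i hni]
  set fA : ({i : Fin k // ¬(i = a ∨ i = b)} → unitI) → unitI → ℝ :=
    fun z u => prodF W Aa (m ((u, v0), z)) * prodF U Ba (m ((u, v0), z)) with hfA
  set fB : ({i : Fin k // ¬(i = a ∨ i = b)} → unitI) → unitI → ℝ :=
    fun z v => prodF W Ab (m ((v0, v), z)) * prodF U Bb (m ((v0, v), z)) with hfB
  have hGsplit : ∀ (u v : unitI) z,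
      G (m ((u, v), z)) = fA z u * fB z v * dK W U (u, v) := by
    intro u v z
    rw [hG]
    show (prodF W A (m ((u,v),z)) * prodF U B (m ((u,v),z))) *
        (edgeF W (m ((u,v),z)) s(a,b) - edgeF U (m ((u,v),z)) s(a,b)) = _
    rw [hPsplit]
    have h1 : prodF W Aa (m ((u, v), z)) = prodF W Aa (m ((u, v0), z)) :=
      prodF_congr W fun e' he' i hie =>
        hAgree_b u v v0 z i (fun h => hAa_nb e' he' (h ▸ hie))
    have h2 : prodF U Ba (m ((u, v), z)) = prodF U Ba (m ((u, v0), z)) :=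
      prodF_congr U fun e' he' i hie =>
        hAgree_b u v v0 z i (fun h => hBa_nb e' he' (h ▸ hie))
    have h3 : prodF W Ab (m ((u, v), z)) = prodF W Ab (m ((v0, v), z)) :=
      prodF_congr W fun e' he' i hie =>
        hAgree_a u v0 v z i (fun h => hAb_na e' he' (h ▸ hie))
    have h4 : prodF U Bb (m ((u, v), z)) = prodF U Bb (m ((v0, v), z)) :=
      prodF_congr U fun e' he' i hie =>
        hAgree_a u v0 v z i (fun h => hBb_na e' he' (h ▸ hie))
    have h5 : edgeF W (m ((u, v), z)) s(a, b) = W.toFun u v := by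
      simp only [edgeF, Sym2.lift_mk]
      rw [hm, splitEquiv_apply_a, splitEquiv_apply_b]
    have h6 : edgeF U (m ((u, v), z)) s(a, b) = U.toFun u v := by
      simp only [edgeF, Sym2.lift_mk]
      rw [hm, splitEquiv_apply_a, splitEquiv_apply_b]
    rw [h1, h2, h3, h4, h5, h6, hfA, hfB]
    show _ = _ * (W.toFun u v - U.toFun u v)
    ring
  -- change of variables and Fubini
  have hci := hmp.integral_comp m.measurableEmbedding G
  have hGmint : Integrable (fun w => G (m w)) volume :=
    bdd_integrable' _ ((hGm.comp m.measurable).aestronglyMeasurable) (fun w => hGb (m w))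
  have hvol2 : (volume : Measure ((unitI × unitI) × ({i : Fin k // ¬(i = a ∨ i = b)} → unitI)))
      = Measure.prod volume volume := rfl
  have hfub : ∫ w, G (m w) = ∫ z, ∫ uv : unitI × unitI, G (m (uv, z)) := by
    rw [hvol2] at hGmint
    rw [hvol2]
    exact integral_prod_symm _ hGmint
  rw [hdiff, ← hci, hfub]
  -- bound the outer integral pointwise
  refine abs_integral_le volume (le_of_eq measure_univ) (cutSup_nonneg (dK_abs_le_one W U))
    (fun z => ?_)
  have hrw : ∫ uv : unitI × unitI, G (m (uv, z))
      = ∫ uv : unitI × unitI, fA z uv.1 * fB z uv.2 * dK W U uv := by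
    refine integral_congr_ae (Filter.Eventually.of_forall fun uv => ?_)
    exact hGsplit uv.1 uv.2 z
  rw [hrw]
  have hmap : ∀ c : unitI, Measurable fun u : unitI => m ((u, c), z) :=
    fun c => m.measurable.comp ((measurable_id.prodMk measurable_const).prodMk measurable_const)
  have hmap2 : ∀ c : unitI, Measurable fun v : unitI => m ((c, v), z) :=
    fun c => m.measurable.comp ((measurable_const.prodMk measurable_id).prodMk measurable_const)
  refine lemA (dK_measurable W U) (dK_abs_le_one W U) ?_ ?_ ?_ ?_ ?_ ?_
  · exact ((measurable_prodF W Aa).comp (hmap v0)).mul ((measurable_prodF U Ba).comp (hmap v0))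
  · exact fun u => mul_nonneg (prodF_nonneg _ _ _) (prodF_nonneg _ _ _)
  · exact fun u => mul_le_one₀ (prodF_le_one _ _ _) (prodF_nonneg _ _ _) (prodF_le_one _ _ _)
  · exact ((measurable_prodF W Ab).comp (hmap2 v0)).mul ((measurable_prodF U Bb).comp (hmap2 v0))
  · exact fun v => mul_nonneg (prodF_nonneg _ _ _) (prodF_nonneg _ _ _)
  · exact fun v => mul_le_one₀ (prodF_le_one _ _ _) (prodF_nonneg _ _ _) (prodF_le_one _ _ _)

open scoped Classical in
lemma telescope (H : SimpleGraph (Fin k)) (W U : Graphon) :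
    ∀ A : Finset (Sym2 (Fin k)), A ⊆ H.edgeFinset →
      |TT H W U A - TT H W U ∅| ≤ (A.card : ℝ) * cutSup (dK W U) := by
  intro A
  induction A using Finset.induction_on with
  | empty => intro _; simp
  | @insert e A heA ih =>
    intro hsub
    have hA : A ⊆ H.edgeFinset := fun t ht => hsub (Finset.mem_insert_of_mem ht)
    have he : e ∈ H.edgeFinset := hsub (Finset.mem_insert_self _ _)
    have h1 := step_edge H W U A he heA
    have h2 := ih hA
    have h3 : |TT H W U (insert e A) - TT H W U ∅|
        ≤ |TT H W U (insert e A) - TT H W U A| + |TT H W U A - TT H W U ∅| := by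
      have := abs_sub_le (TT H W U (insert e A)) (TT H W U A) (TT H W U ∅)
      exact this
    rw [Finset.card_insert_of_notMem heA]
    push_cast
    calc |TT H W U (insert e A) - TT H W U ∅|
        ≤ |TT H W U (insert e A) - TT H W U A| + |TT H W U A - TT H W U ∅| := h3
      _ ≤ cutSup (dK W U) + (A.card : ℝ) * cutSup (dK W U) := add_le_add h1 h2
      _ = ((A.card : ℝ) + 1) * cutSup (dK W U) := by ring

open scoped Classical in
lemma counting (H : SimpleGraph (Fin k)) (W U : Graphon) :
    |homDensityG H W - homDensityG H U| ≤ (H.edgeFinset.card : ℝ) * cutSup (dK W U) := by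
  have h1 : homDensityG H W = TT H W U H.edgeFinset := by
    unfold TT
    show (∫ x : Fin k → unitI, prodF W H.edgeFinset x) = _
    refine integral_congr_ae (Filter.Eventually.of_forall fun x => ?_)
    rw [Finset.sdiff_self]
    show prodF W H.edgeFinset x = prodF W H.edgeFinset x * prodF U ∅ x
    unfold prodF
    simp
  have h2 : homDensityG H U = TT H W U ∅ := by
    unfold TT
    show (∫ x : Fin k → unitI, prodF U H.edgeFinset x) = _
    refine integral_congr_ae (Filter.Eventually.of_forall fun x => ?_)
    rw [Finset.sdiff_empty]
    show prodF U H.edgeFinset x = prodF W ∅ x * prodF U H.edgeFinset x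
    unfold prodF
    simp
  rw [h1, h2]
  exact telescope H W U H.edgeFinset (le_refl _)

end Counting

instance cutDist_index_nonempty :
    Nonempty {p : (unitI ≃ᵐ unitI) × (unitI ≃ᵐ unitI) //
      MeasurePreserving p.1 volume volume ∧ MeasurePreserving p.2 volume volume} :=
  ⟨⟨(MeasurableEquiv.refl unitI, MeasurableEquiv.refl unitI),
    MeasurePreserving.id _, MeasurePreserving.id _⟩⟩

open scoped Classical in
/-- **Theorem 3.** For every finite simple graph `H`, the homomorphism density functional
`t(H, ·)` is Lipschitz (with constant `|E(H)|`) with respect to the cut distance. -/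
theorem homDensity_lipschitz_cutDist {k : ℕ} (H : SimpleGraph (Fin k)) (W U : Graphon) :
    |homDensityG H W - homDensityG H U| ≤ (H.edgeFinset.card : ℝ) * cutDist W U := by
  rcases Nat.eq_zero_or_pos H.edgeFinset.card with h0 | hpos
  · have hE : H.edgeFinset = ∅ := Finset.card_eq_zero.mp h0
    have hWU : homDensityG H W = homDensityG H U := by
      unfold homDensityG
      rw [hE]
      simp
    rw [hWU, h0, sub_self, abs_zero]
    simp
  · have hm : (0 : ℝ) < (H.edgeFinset.card : ℝ) := by exact_mod_cast hpos
    rw [mul_comm]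
    rw [← div_le_iff₀ hm]
    unfold cutDist
    refine le_ciInf ?_
    rintro ⟨⟨φ, ψ⟩, hφ, hψ⟩
    rw [div_le_iff₀ hm]
    have hiW := homDensityG_comp H W φ hφ
    have hiU := homDensityG_comp H U ψ hψ
    have hc := counting H (W.comp φ) (U.comp ψ)
    rw [hiW, hiU] at hc
    calc |homDensityG H W - homDensityG H U|
        ≤ (H.edgeFinset.card : ℝ) * cutSup (dK (W.comp φ) (U.comp ψ)) := hc
      _ = (⨆ ST : {ST : Set unitI × Set unitI // MeasurableSet ST.1 ∧ MeasurableSet ST.2},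
            |∫ q in ST.1.1 ×ˢ ST.1.2,
              (W.toFun (φ q.1) (φ q.2) - U.toFun (ψ q.1) (ψ q.2))|) *
          (H.edgeFinset.card : ℝ) := by
          rw [mul_comm]
          rfl
end
end

section
/- (Erdős) For every finite simple graph G, the homomorphism density of the 4-cycle in G is at least the fourth power of the homomorphism density of an edge in G: t(C₄, G) ≥ t(K₂, G)⁴. Equivalently, hom(C₄, G) · |V(G)|⁴ ≥ hom(K₂, G)⁴. -/
open MeasureTheory

attribute [local instance] MeasureTheory.Measure.Subtype.measureSpace

noncomputable section

/- ===================== auxiliary lemmas for the proof ===================== -/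

private def funFin4Equiv (α : Type*) : (Fin 4 → α) ≃ α × α × α × α where
  toFun f := (f 0, f 1, f 2, f 3)
  invFun p := ![p.1, p.2.1, p.2.2.1, p.2.2.2]
  left_inv f := by funext i; fin_cases i <;> rfl
  right_inv p := rfl

open Finset in
open scoped Classical in
private lemma natCard_hom_eq' {n k : ℕ} (G : SimpleGraph (Fin n)) (H : SimpleGraph (Fin k)) :
    Nat.card (H →g G) =
      (univ.filter (fun f : Fin k → Fin n => ∀ a b, H.Adj a b → G.Adj (f a) (f b))).card := by
  have e : (H →g G) ≃ {f : Fin k → Fin n // ∀ a b, H.Adj a b → G.Adj (f a) (f b)} :=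
    { toFun := fun φ => ⟨φ.toFun, fun a b h => φ.map_rel' h⟩
      invFun := fun f => ⟨f.1, fun h => f.2 _ _ h⟩
      left_inv := fun φ => rfl
      right_inv := fun f => rfl }
  rw [Nat.card_congr e, Nat.card_eq_fintype_card, Fintype.card_subtype]

/-- (Erdős) `t(C₄, G) ≥ t(K₂, G)⁴` for every finite simple graph `G`; equivalently,
`hom(C₄, G) · |V(G)|⁴ ≥ hom(K₂, G)⁴`. -/
theorem cycle4_density_ge_edge_density_pow_four {n : ℕ} (hn : 0 < n)
    (G : SimpleGraph (Fin n)) :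
    homDensity C4 G ≥ (homDensity K2 G) ^ 4 ∧
      homCount C4 G * n ^ 4 ≥ (homCount K2 G) ^ 4 := by
  classical
  set a : Fin n → Fin n → ℝ := fun u v => if G.Adj u v then 1 else 0 with ha
  have ha_symm : ∀ u v, a u v = a v u := by
    intro u v; simp only [ha]; rw [SimpleGraph.adj_comm]
  have ha_nonneg : ∀ u v, 0 ≤ a u v := by
    intro u v; simp only [ha]; split <;> norm_num
  set c : Fin n → Fin n → ℝ := fun u w => ∑ v, a u v * a v w with hc
  set K : ℝ := ∑ u, ∑ v, a u v with hK
  set D : Fin n → ℝ := fun u => ∑ v, a u v with hD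
  set S : ℝ := ∑ v, D v ^ 2 with hS
  set T : ℝ := ∑ u, ∑ w, c u w ^ 2 with hT
  -- K2 count
  have hK2 : (homCount K2 G : ℝ) = K := by
    rw [homCount, natCard_hom_eq' G K2]
    have hiff : ∀ f : Fin 2 → Fin n,
        (∀ x y, K2.Adj x y → G.Adj (f x) (f y)) ↔ G.Adj (f 0) (f 1) := by
      intro f
      constructor
      · intro h; exact h 0 1 (by simp [K2])
      · intro h x y hxy
        fin_cases x <;> fin_cases y <;> simp_all [K2]
        exact G.adj_symm h
    rw [← Finset.sum_boole]
    set e2 := piFinTwoEquiv (fun _ : Fin 2 => Fin n) with he2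
    rw [← Fintype.sum_equiv e2.symm
      (fun p : Fin n × Fin n => if (∀ x y, K2.Adj x y → G.Adj ((e2.symm p) x) ((e2.symm p) y))
        then (1 : ℝ) else 0) _ (fun p => rfl)]
    rw [Fintype.sum_prod_type, hK]
    refine Finset.sum_congr rfl fun u _ => Finset.sum_congr rfl fun v _ => ?_
    simp only [hiff]
    have h0 : e2.symm (u, v) 0 = u := by rw [he2]; rfl
    have h1 : e2.symm (u, v) 1 = v := by rw [he2]; rfl
    rw [h0, h1]
  -- C4 count
  have hC4 : (homCount C4 G : ℝ) = T := by
    rw [homCount, natCard_hom_eq' G C4]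
    have adj01 : C4.Adj 0 1 := by rw [C4, SimpleGraph.cycleGraph_adj]; decide
    have adj12 : C4.Adj 1 2 := by rw [C4, SimpleGraph.cycleGraph_adj]; decide
    have adj23 : C4.Adj 2 3 := by rw [C4, SimpleGraph.cycleGraph_adj]; decide
    have adj30 : C4.Adj 3 0 := by rw [C4, SimpleGraph.cycleGraph_adj]; decide
    have hiff : ∀ f : Fin 4 → Fin n,
        (∀ x y, C4.Adj x y → G.Adj (f x) (f y)) ↔
          (G.Adj (f 0) (f 1) ∧ G.Adj (f 1) (f 2) ∧ G.Adj (f 2) (f 3) ∧ G.Adj (f 3) (f 0)) := by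
      intro f
      constructor
      · intro h; exact ⟨h 0 1 adj01, h 1 2 adj12, h 2 3 adj23, h 3 0 adj30⟩
      · rintro ⟨h1, h2, h3, h4⟩ x y hxy
        rw [C4, SimpleGraph.cycleGraph_adj] at hxy
        fin_cases x <;> fin_cases y <;>
          first
            | exact absurd hxy (by decide)
            | exact h1 | exact G.adj_symm h1
            | exact h2 | exact G.adj_symm h2
            | exact h3 | exact G.adj_symm h3
            | exact h4 | exact G.adj_symm h4
    rw [← Finset.sum_boole]
    set e4 := funFin4Equiv (Fin n) with he4
    rw [← Fintype.sum_equiv e4.symm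
      (fun p : Fin n × Fin n × Fin n × Fin n =>
        if (∀ x y, C4.Adj x y → G.Adj ((e4.symm p) x) ((e4.symm p) y)) then (1 : ℝ) else 0)
      _ (fun p => rfl)]
    simp only [Fintype.sum_prod_type]
    have key : ∀ x0 x1 x2 x3 : Fin n,
        (if (∀ x y, C4.Adj x y →
            G.Adj ((e4.symm (x0, x1, x2, x3)) x) ((e4.symm (x0, x1, x2, x3)) y))
          then (1 : ℝ) else 0) = a x0 x1 * a x1 x2 * a x2 x3 * a x3 x0 := by
      intro x0 x1 x2 x3
      simp only [hiff]
      have h0 : e4.symm (x0, x1, x2, x3) 0 = x0 := by rw [he4]; rfl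
      have h1 : e4.symm (x0, x1, x2, x3) 1 = x1 := by rw [he4]; rfl
      have h2' : e4.symm (x0, x1, x2, x3) 2 = x2 := by rw [he4]; rfl
      have h3' : e4.symm (x0, x1, x2, x3) 3 = x3 := by rw [he4]; rfl
      rw [h0, h1, h2', h3']
      by_cases h1 : G.Adj x0 x1 <;> by_cases h2 : G.Adj x1 x2 <;>
        by_cases h3 : G.Adj x2 x3 <;> by_cases h4 : G.Adj x3 x0 <;>
        simp [ha, h1, h2, h3, h4]
    simp only [key]
    -- now rearrange the quadruple sum
    rw [hT]
    refine Finset.sum_congr rfl fun x0 _ => ?_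
    rw [Finset.sum_comm]
    refine Finset.sum_congr rfl fun x2 _ => ?_
    have : c x0 x2 ^ 2 = (∑ x1, a x0 x1 * a x1 x2) * (∑ x3, a x2 x3 * a x3 x0) := by
      rw [sq, hc]
      congr 1
      refine Finset.sum_congr rfl fun v _ => ?_
      rw [ha_symm x0 v, ha_symm v x2]; ring
    rw [this, Finset.sum_mul_sum]
    refine Finset.sum_congr rfl fun x1 _ => Finset.sum_congr rfl fun x3 _ => by ring
  -- sum of c equals S
  have hsumc : (∑ u, ∑ w, c u w) = S := by
    simp only [hc]
    rw [Finset.sum_comm]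
    calc (∑ w, ∑ u, ∑ v, a u v * a v w)
        = ∑ w, ∑ v, ∑ u, a u v * a v w := by
          exact Finset.sum_congr rfl fun w _ => Finset.sum_comm
      _ = ∑ v, ∑ w, ∑ u, a u v * a v w := Finset.sum_comm
      _ = ∑ v, D v ^ 2 := by
          refine Finset.sum_congr rfl fun v _ => ?_
          rw [sq]
          calc (∑ w, ∑ u, a u v * a v w)
              = ∑ w, (∑ u, a u v) * a v w := by
                exact Finset.sum_congr rfl fun w _ => (Finset.sum_mul _ _ _).symm
            _ = (∑ u, a u v) * ∑ w, a v w := (Finset.mul_sum _ _ _).symm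
            _ = D v * D v := by
                congr 1
                exact Finset.sum_congr rfl fun u _ => ha_symm u v
  have hKnn : 0 ≤ K := Finset.sum_nonneg fun u _ => Finset.sum_nonneg fun v _ => ha_nonneg u v
  have hSnn : 0 ≤ S := Finset.sum_nonneg fun v _ => sq_nonneg _
  have hTnn : 0 ≤ T := Finset.sum_nonneg fun u _ => Finset.sum_nonneg fun w _ => sq_nonneg _
  -- Cauchy–Schwarz step 1: K^2 ≤ n * S
  have cs1 : K ^ 2 ≤ (n : ℝ) * S := by
    have := sq_sum_le_card_mul_sum_sq (s := (Finset.univ : Finset (Fin n))) (f := D)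
    simpa [hK, hS, hD] using this
  -- Cauchy–Schwarz step 2: S^2 ≤ n^2 * T
  have cs2 : S ^ 2 ≤ (n : ℝ) ^ 2 * T := by
    have h1 : (∑ p : Fin n × Fin n, c p.1 p.2) = S := by
      rw [← hsumc, Fintype.sum_prod_type]
    have h2 : (∑ p : Fin n × Fin n, c p.1 p.2 ^ 2) = T := by
      rw [hT, Fintype.sum_prod_type]
    have := sq_sum_le_card_mul_sum_sq (s := (Finset.univ : Finset (Fin n × Fin n)))
      (f := fun p => c p.1 p.2)
    rw [h1, h2] at this
    simpa [sq] using this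
  have main : K ^ 4 ≤ (n : ℝ) ^ 4 * T := by
    have h1 : K ^ 4 = (K ^ 2) ^ 2 := by ring
    have h2 : (K ^ 2) ^ 2 ≤ ((n : ℝ) * S) ^ 2 :=
      pow_le_pow_left₀ (sq_nonneg K) cs1 2
    have h3 : ((n : ℝ) * S) ^ 2 = (n : ℝ) ^ 2 * S ^ 2 := by ring
    nlinarith [sq_nonneg ((n:ℝ)), Nat.cast_nonneg (α := ℝ) n]
  have hnpos : (0 : ℝ) < n := by exact_mod_cast hn
  constructor
  · rw [homDensity, homDensity, hK2, hC4, ge_iff_le, div_pow, div_le_div_iff₀ (by positivity)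
      (by positivity)]
    calc K ^ 4 * (n : ℝ) ^ 4 ≤ ((n : ℝ) ^ 4 * T) * (n : ℝ) ^ 4 := by
          apply mul_le_mul_of_nonneg_right main (by positivity)
      _ = T * ((n : ℝ) ^ 2) ^ 4 := by ring
  · rw [ge_iff_le, ← Nat.cast_le (α := ℝ)]
    push_cast
    rw [hK2, hC4]
    calc K ^ 4 ≤ (n : ℝ) ^ 4 * T := main
      _ = T * (n : ℝ) ^ 4 := by ring
end
end

section
/- For every graphon W, the 4-cycle density of W is at least the fourth power of the edge density of W: ∫_{[0,1]⁴} W(x₁,x₂) W(x₂,x₃) W(x₃,x₄) W(x₄,x₁) dx₁ dx₂ dx₃ dx₄ ≥ (∫_{[0,1]²} W(x,y) dx dy)⁴. -/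
open MeasureTheory

attribute [local instance] MeasureTheory.Measure.Subtype.measureSpace

noncomputable section

namespace GraphonAux

lemma integrable_of_bd {α : Type*} [MeasureSpace α] [IsFiniteMeasure (volume : Measure α)]
    {f : α → ℝ} (hm : AEStronglyMeasurable f volume) (hb : ∀ x, |f x| ≤ 1) : Integrable f :=
  ⟨hm, HasFiniteIntegral.of_bounded (C := 1) (Filter.Eventually.of_forall hb)⟩

lemma abs_le_one_of_mem {x : ℝ} (h0 : 0 ≤ x) (h1 : x ≤ 1) : |x| ≤ 1 := by
  rw [abs_of_nonneg h0]; exact h1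

lemma integral_le_one {α : Type*} [MeasureSpace α] [IsProbabilityMeasure (volume : Measure α)]
    {f : α → ℝ} (hi : Integrable f) (h1 : ∀ x, f x ≤ 1) : ∫ x, f x ≤ 1 := by
  calc ∫ x, f x ≤ ∫ _x : α, (1 : ℝ) := integral_mono hi (integrable_const _) h1
  _ = 1 := by simp

lemma cs_int {α : Type*} [MeasureSpace α] [IsProbabilityMeasure (volume : Measure α)]
    {f : α → ℝ} (hm : AEStronglyMeasurable f volume) (hb : ∀ x, |f x| ≤ 1) :
    (∫ x, f x) ^ 2 ≤ ∫ x, (f x) ^ 2 := by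
  have hmem : MemLp f 2 (volume : Measure α) :=
    MemLp.of_bound hm 1 (Filter.Eventually.of_forall hb)
  have h := ProbabilityTheory.variance_nonneg f (volume : Measure α)
  rw [ProbabilityTheory.variance_eq_sub hmem] at h
  simp only [Pi.pow_apply] at h
  linarith

lemma stepFin {n : ℕ} (F : (Fin (n+1) → unitI) → ℝ) (hF : Integrable F) :
    ∫ x, F x = ∫ a : unitI, ∫ y : Fin n → unitI, F (Fin.cons a y) := by
  have h := (measurePreserving_piFinSuccAbove (fun _ : Fin (n+1) => (volume : Measure unitI)) 0)
  have hemb := (MeasurableEquiv.piFinSuccAbove (fun _ : Fin (n+1) => unitI) 0).symm.measurableEmbedding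
  have hF' : Integrable F (Measure.pi fun _ => volume) := by rwa [← volume_pi]
  have hint : Integrable (fun x => F ((MeasurableEquiv.piFinSuccAbove (fun _ : Fin (n+1) => unitI) 0).symm x))
      ((volume : Measure unitI).prod (Measure.pi fun _ => volume)) :=
    ((h.symm _).integrable_comp_emb hemb).2 hF'
  rw [show (volume : Measure (Fin (n+1) → unitI)) = Measure.pi fun _ => volume from volume_pi,
    ← (h.symm _).integral_comp hemb,
    MeasureTheory.integral_prod _ hint]
  rw [show ((volume : Measure (Fin n → unitI))) = Measure.pi fun _ => volume from volume_pi]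
  congr 1 with a
  congr 1 with y
  congr 1
  simp [MeasurableEquiv.piFinSuccAbove_symm_apply, Fin.insertNthEquiv, Fin.insertNth_zero]

lemma integral_fin0 (c : ℝ) : ∫ _y : Fin 0 → unitI, c = c := by
  rw [show (volume : Measure (Fin 0 → unitI)) = Measure.pi fun _ => volume from volume_pi,
    integral_const]
  simp

lemma integral_fin4 (F : unitI → unitI → unitI → unitI → ℝ)
    (hm : Measurable fun q : unitI × unitI × unitI × unitI => F q.1 q.2.1 q.2.2.1 q.2.2.2)
    (hb : ∀ a b c d, |F a b c d| ≤ 1) :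
    ∫ x : Fin 4 → unitI, F (x 0) (x 1) (x 2) (x 3) = ∫ a, ∫ b, ∫ c, ∫ d, F a b c d := by
  have m4 : Measurable fun x : Fin 4 → unitI => F (x 0) (x 1) (x 2) (x 3) :=
    hm.comp' (f := fun x : Fin 4 → unitI => (x 0, x 1, x 2, x 3)) ((measurable_pi_apply 0).prodMk ((measurable_pi_apply 1).prodMk
      ((measurable_pi_apply 2).prodMk (measurable_pi_apply 3))))
  have i4 : Integrable fun x : Fin 4 → unitI => F (x 0) (x 1) (x 2) (x 3) :=
    integrable_of_bd m4.aestronglyMeasurable (fun x => hb _ _ _ _)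
  rw [stepFin _ i4]
  congr 1 with a
  have m3 : Measurable fun y : Fin 3 → unitI => F a (y 0) (y 1) (y 2) :=
    hm.comp' (f := fun y : Fin 3 → unitI => (a, y 0, y 1, y 2)) (measurable_const.prodMk ((measurable_pi_apply 0).prodMk
      ((measurable_pi_apply 1).prodMk (measurable_pi_apply 2))))
  have i3 : Integrable fun y : Fin 3 → unitI => F a (y 0) (y 1) (y 2) :=
    integrable_of_bd m3.aestronglyMeasurable (fun y => hb _ _ _ _)
  show ∫ y : Fin 3 → unitI, F a (y 0) (y 1) (y 2) = _
  rw [stepFin _ i3]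
  congr 1 with b
  have m2 : Measurable fun y : Fin 2 → unitI => F a b (y 0) (y 1) :=
    hm.comp' (f := fun y : Fin 2 → unitI => (a, b, y 0, y 1)) (measurable_const.prodMk (measurable_const.prodMk
      ((measurable_pi_apply 0).prodMk (measurable_pi_apply 1))))
  have i2 : Integrable fun y : Fin 2 → unitI => F a b (y 0) (y 1) :=
    integrable_of_bd m2.aestronglyMeasurable (fun y => hb _ _ _ _)
  show ∫ y : Fin 2 → unitI, F a b (y 0) (y 1) = _
  rw [stepFin _ i2]
  congr 1 with c
  have m1 : Measurable fun y : Fin 1 → unitI => F a b c (y 0) :=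
    hm.comp' (f := fun y : Fin 1 → unitI => (a, b, c, y 0)) (measurable_const.prodMk (measurable_const.prodMk
      (measurable_const.prodMk (measurable_pi_apply 0))))
  have i1 : Integrable fun y : Fin 1 → unitI => F a b c (y 0) :=
    integrable_of_bd m1.aestronglyMeasurable (fun y => hb _ _ _ _)
  show ∫ y : Fin 1 → unitI, F a b c (y 0) = _
  rw [stepFin _ i1]
  congr 1 with d
  show ∫ _y : Fin 0 → unitI, F a b c d = F a b c d
  exact integral_fin0 _


variable (W : Graphon)

/-- `g b = ∫ c, W b c`. -/
def gW (b : unitI) : ℝ := ∫ c, W.toFun b c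

/-- `f (a,c) = ∫ b, W a b * W b c`. -/
def fW (p : unitI × unitI) : ℝ := ∫ b, W.toFun p.1 b * W.toFun b p.2

lemma Wm2 : Measurable (fun p : unitI × unitI => W.toFun p.1 p.2) := W.measurable'

lemma Wabs (a b : unitI) : |W.toFun a b| ≤ 1 := abs_le_one_of_mem (W.nonneg' a b) (W.le_one' a b)

lemma W_int2 : Integrable (fun p : unitI × unitI => W.toFun p.1 p.2) :=
  integrable_of_bd (Wm2 W).aestronglyMeasurable (fun p => Wabs W p.1 p.2)

lemma gW_meas : StronglyMeasurable (gW W) := by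
  have : StronglyMeasurable (fun p : unitI × unitI => W.toFun p.1 p.2) :=
    (Wm2 W).stronglyMeasurable
  exact this.integral_prod_right'

lemma gW_nonneg (b : unitI) : 0 ≤ gW W b :=
  integral_nonneg (fun c => W.nonneg' b c)

lemma gW_le_one (b : unitI) : gW W b ≤ 1 := by
  refine integral_le_one ?_ (fun c => W.le_one' b c)
  exact integrable_of_bd ((W.measurable'.comp (measurable_prodMk_left (x := b))).aestronglyMeasurable)
    (fun c => Wabs W b c)

lemma gW_abs (b : unitI) : |gW W b| ≤ 1 := abs_le_one_of_mem (gW_nonneg W b) (gW_le_one W b)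

lemma prodm : Measurable (fun q : (unitI × unitI) × unitI => W.toFun q.1.1 q.2 * W.toFun q.2 q.1.2) := by
  have h1 : Measurable (fun q : (unitI × unitI) × unitI => W.toFun q.1.1 q.2) :=
    W.measurable'.comp ((measurable_fst.comp measurable_fst).prodMk measurable_snd)
  have h2 : Measurable (fun q : (unitI × unitI) × unitI => W.toFun q.2 q.1.2) :=
    W.measurable'.comp (measurable_snd.prodMk (measurable_snd.comp measurable_fst))
  exact h1.mul h2

lemma fW_meas : StronglyMeasurable (fW W) :=
  (prodm W).stronglyMeasurable.integral_prod_right'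

lemma fW_nonneg (p : unitI × unitI) : 0 ≤ fW W p :=
  integral_nonneg (fun b => mul_nonneg (W.nonneg' _ _) (W.nonneg' _ _))

lemma fW_int_inner (p : unitI × unitI) :
    Integrable (fun b => W.toFun p.1 b * W.toFun b p.2) := by
  refine integrable_of_bd ?_ (fun b => ?_)
  · exact ((prodm W).comp (measurable_prodMk_left (x := p))).aestronglyMeasurable
  · rw [abs_mul]
    exact mul_le_one₀ (Wabs W _ _) (abs_nonneg _) (Wabs W _ _)

lemma fW_le_one (p : unitI × unitI) : fW W p ≤ 1 :=
  integral_le_one (fW_int_inner W p)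
    (fun b => mul_le_one₀ (W.le_one' _ _) (W.nonneg' _ _) (W.le_one' _ _))

lemma fW_abs (p : unitI × unitI) : |fW W p| ≤ 1 :=
  abs_le_one_of_mem (fW_nonneg W p) (fW_le_one W p)

lemma fW_symm (a c : unitI) : fW W (c, a) = fW W (a, c) := by
  unfold fW
  congr 1 with b
  rw [W.symm' c b, W.symm' b a, mul_comm]

lemma gW_symm_int (b : unitI) : ∫ a, W.toFun a b = gW W b := by
  unfold gW
  congr 1 with a
  exact W.symm' a b

/-- The edge density equals `∫ gW`. -/
lemma edge_eq : ∫ p : unitI × unitI, W.toFun p.1 p.2 = ∫ a, gW W a := by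
  rw [show (volume : Measure (unitI × unitI)) = (volume : Measure unitI).prod volume from rfl]
  exact integral_prod _ (by rw [← Measure.volume_eq_prod]; exact W_int2 W)

lemma swap_int {f : unitI → unitI → ℝ} (hm : AEStronglyMeasurable (Function.uncurry f)
      ((volume : Measure unitI).prod volume)) (hb : ∀ x y, |f x y| ≤ 1) :
    ∫ a, ∫ b, f a b = ∫ b, ∫ a, f a b := by
  refine integral_integral_swap ⟨hm, ?_⟩
  exact HasFiniteIntegral.of_bounded (C := 1) (Filter.Eventually.of_forall (fun p => hb p.1 p.2))

/-- `∫ fW = ∫ gW²`. -/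
lemma int_fW : ∫ p : unitI × unitI, fW W p = ∫ b, (gW W b) ^ 2 := by
  have h1 : ∫ p : unitI × unitI, fW W p = ∫ a, ∫ c, fW W (a, c) := by
    rw [show (volume : Measure (unitI × unitI)) = (volume : Measure unitI).prod volume from rfl]
    refine integral_prod _ ?_
    rw [← Measure.volume_eq_prod]
    exact integrable_of_bd (fW_meas W).aestronglyMeasurable (fW_abs W)
  rw [h1]
  have h2 : ∀ a : unitI, ∫ c, fW W (a, c) = ∫ b, W.toFun a b * gW W b := by
    intro a
    have hswap : ∫ c, ∫ b, W.toFun a b * W.toFun b c = ∫ b, ∫ c, W.toFun a b * W.toFun b c := by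
      refine swap_int ?_ (fun c b => ?_)
      · have : Measurable (fun q : unitI × unitI => W.toFun a q.2 * W.toFun q.2 q.1) := by
          have h1 : Measurable (fun q : unitI × unitI => W.toFun a q.2) :=
            W.measurable'.comp (measurable_const.prodMk measurable_snd)
          have h2 : Measurable (fun q : unitI × unitI => W.toFun q.2 q.1) :=
            W.measurable'.comp (measurable_snd.prodMk measurable_fst)
          exact h1.mul h2
        exact this.aestronglyMeasurable
      · rw [abs_mul]; exact mul_le_one₀ (Wabs W _ _) (abs_nonneg _) (Wabs W _ _)
    show ∫ c, ∫ b, W.toFun a b * W.toFun b c = _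
    rw [hswap]
    congr 1 with b
    rw [integral_const_mul]
    rfl
  simp_rw [h2]
  have h3 : ∫ a, ∫ b, W.toFun a b * gW W b = ∫ b, ∫ a, W.toFun a b * gW W b := by
    refine swap_int ?_ (fun a b => ?_)
    · have : Measurable (fun q : unitI × unitI => W.toFun q.1 q.2) := W.measurable'
      exact (this.mul ((gW_meas W).measurable.comp measurable_snd)).aestronglyMeasurable
    · rw [abs_mul]; exact mul_le_one₀ (Wabs W _ _) (abs_nonneg _) (gW_abs W b)
  rw [h3]
  congr 1 with b
  rw [integral_mul_const, gW_symm_int, sq]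

end GraphonAux

open GraphonAux in
/-- For every graphon `W`, the 4-cycle density of `W` is at least the fourth power of the
edge density of `W`. -/
theorem graphon_cycle4_density_ge_edge_density_pow_four (W : Graphon) :
    (∫ x : Fin 4 → unitI,
        W.toFun (x 0) (x 1) * W.toFun (x 1) (x 2) * W.toFun (x 2) (x 3) * W.toFun (x 3) (x 0))
      ≥ (∫ p : unitI × unitI, W.toFun p.1 p.2) ^ 4 := by
  set Wt := W.toFun with hWt
  -- measurability of the 4-variable integrand
  have hm4 : Measurable fun q : unitI × unitI × unitI × unitI =>
      Wt q.1 q.2.1 * Wt q.2.1 q.2.2.1 * Wt q.2.2.1 q.2.2.2 * Wt q.2.2.2 q.1 := by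
    have h1 : Measurable fun q : unitI × unitI × unitI × unitI => Wt q.1 q.2.1 :=
      W.measurable'.comp' (measurable_fst.prodMk (measurable_fst.comp measurable_snd))
    have h2 : Measurable fun q : unitI × unitI × unitI × unitI => Wt q.2.1 q.2.2.1 :=
      W.measurable'.comp' ((measurable_fst.comp measurable_snd).prodMk
        ((measurable_fst.comp measurable_snd).comp measurable_snd))
    have h3 : Measurable fun q : unitI × unitI × unitI × unitI => Wt q.2.2.1 q.2.2.2 :=
      W.measurable'.comp' (((measurable_fst.comp measurable_snd).comp measurable_snd).prodMk
        (((measurable_snd.comp measurable_snd).comp measurable_snd)))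
    have h4 : Measurable fun q : unitI × unitI × unitI × unitI => Wt q.2.2.2 q.1 :=
      W.measurable'.comp' (((measurable_snd.comp measurable_snd).comp measurable_snd).prodMk
        measurable_fst)
    exact ((h1.mul h2).mul h3).mul h4
  have hb4 : ∀ a b c d : unitI, |Wt a b * Wt b c * Wt c d * Wt d a| ≤ 1 := by
    intro a b c d
    rw [abs_mul, abs_mul, abs_mul]
    exact mul_le_one₀ (mul_le_one₀ (mul_le_one₀ (Wabs W a b) (abs_nonneg _) (Wabs W b c))
      (abs_nonneg _) (Wabs W c d)) (abs_nonneg _) (Wabs W d a)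
  -- step 1: rewrite as iterated integral
  rw [ge_iff_le, integral_fin4 (fun a b c d => Wt a b * Wt b c * Wt c d * Wt d a) hm4 hb4]
  -- step 2: innermost integral gives fW
  have hd : ∀ a b c : unitI, ∫ d, Wt a b * Wt b c * Wt c d * Wt d a
      = Wt a b * Wt b c * fW W (a, c) := by
    intro a b c
    have : (fun d => Wt a b * Wt b c * Wt c d * Wt d a)
        = fun d => (Wt a b * Wt b c) * (Wt c d * Wt d a) := by funext d; ring
    rw [this, integral_const_mul]
    have : ∫ d, Wt c d * Wt d a = fW W (c, a) := rfl
    rw [this, fW_symm]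
  simp_rw [hd]
  -- step 3: for fixed a, ∫ b ∫ c (Wt a b * Wt b c) * fW (a,c) = ∫ c fW(a,c)^2
  have hc : ∀ a : unitI, (∫ b, ∫ c, Wt a b * Wt b c * fW W (a, c)) = ∫ c, fW W (a, c) ^ 2 := by
    intro a
    have hswap : (∫ b, ∫ c, Wt a b * Wt b c * fW W (a, c))
        = ∫ c, ∫ b, Wt a b * Wt b c * fW W (a, c) := by
      refine swap_int ?_ (fun b c => ?_)
      · have h1 : Measurable fun q : unitI × unitI => Wt a q.1 :=
          W.measurable'.comp' (measurable_const.prodMk measurable_fst)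
        have h2 : Measurable fun q : unitI × unitI => Wt q.1 q.2 := W.measurable'
        have h3 : Measurable fun q : unitI × unitI => fW W (a, q.2) :=
          (fW_meas W).measurable.comp' (measurable_const.prodMk measurable_snd)
        exact (((h1.mul h2).mul h3)).aestronglyMeasurable
      · rw [abs_mul, abs_mul]
        exact mul_le_one₀ (mul_le_one₀ (Wabs W _ _) (abs_nonneg _) (Wabs W _ _))
          (abs_nonneg _) (fW_abs W _)
    rw [hswap]
    congr 1 with c
    rw [integral_mul_const]
    have : ∫ b, Wt a b * Wt b c = fW W (a, c) := rfl
    rw [this, sq]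
  simp_rw [hc]
  -- step 4: the LHS of the goal is now ∫ a ∫ c fW(a,c)^2 = ∫ p, fW p ^ 2
  have hfW2int : Integrable (fun p : unitI × unitI => fW W p ^ 2) := by
    refine integrable_of_bd ((fW_meas W).measurable.pow_const 2).aestronglyMeasurable (fun p => ?_)
    rw [abs_pow]
    exact pow_le_one₀ (abs_nonneg _) (fW_abs W p)
  have hsq : (∫ a, ∫ c, fW W (a, c) ^ 2) = ∫ p : unitI × unitI, fW W p ^ 2 := by
    rw [show (volume : Measure (unitI × unitI)) = (volume : Measure unitI).prod volume from rfl]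
      at hfW2int ⊢
    exact (integral_prod _ hfW2int).symm
  rw [hsq]
  -- step 5: chain of inequalities
  have h2 : (∫ p : unitI × unitI, fW W p) ^ 2 ≤ ∫ p : unitI × unitI, fW W p ^ 2 :=
    cs_int (fW_meas W).aestronglyMeasurable (fW_abs W)
  have h4 : (∫ b, gW W b) ^ 2 ≤ ∫ b, gW W b ^ 2 :=
    cs_int (gW_meas W).aestronglyMeasurable (gW_abs W)
  calc (∫ p : unitI × unitI, Wt p.1 p.2) ^ 4
      = ((∫ b, gW W b) ^ 2) ^ 2 := by rw [edge_eq]; ring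
    _ ≤ (∫ b, gW W b ^ 2) ^ 2 := pow_le_pow_left₀ (sq_nonneg _) h4 2
    _ = (∫ p : unitI × unitI, fW W p) ^ 2 := by rw [int_fW]
    _ ≤ ∫ p : unitI × unitI, fW W p ^ 2 := h2
end
end

section
/- No finite graph attains the minimum 4-cycle density among graphs of edge density at least 1/2: for every finite simple graph G with at least one vertex, if t(K₂, G) ≥ 1/2 then t(C₄, G) > 1/16. -/
open MeasureTheory

attribute [local instance] MeasureTheory.Measure.Subtype.measureSpace

noncomputable section

instance : DecidableRel C4.Adj := inferInstanceAs (DecidableRel (SimpleGraph.cycleGraph 4).Adj)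
instance : DecidableRel K2.Adj := inferInstanceAs (DecidableRel (⊤ : SimpleGraph (Fin 2)).Adj)

noncomputable
def c4Equiv {n : ℕ} (G : SimpleGraph (Fin n)) :
    (C4 →g G) ≃ Σ uv : Fin n × Fin n,
      ({w : Fin n // G.Adj uv.1 w ∧ G.Adj uv.2 w} × {w : Fin n // G.Adj uv.1 w ∧ G.Adj uv.2 w}) where
  toFun f := ⟨(f 0, f 2),
    ⟨f 1, f.map_rel (by decide), f.map_rel (by decide)⟩,
    ⟨f 3, f.map_rel (by decide), f.map_rel (by decide)⟩⟩
  invFun p := ⟨![p.1.1, p.2.1.1, p.1.2, p.2.2.1], by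
    intro a b hab
    have h1 := p.2.1.2
    have h2 := p.2.2.2
    fin_cases a <;> fin_cases b <;>
      first
        | exact absurd hab (by decide)
        | (simp only [Matrix.cons_val', Matrix.cons_val_zero, Matrix.cons_val_one,
            Matrix.head_cons, Matrix.cons_val_fin_one, Matrix.cons_val_succ]
           first
             | exact h1.1 | exact h1.2 | exact h2.1 | exact h2.2
             | exact h1.1.symm | exact h1.2.symm | exact h2.1.symm | exact h2.2.symm)⟩
  left_inv f := by
    ext x
    fin_cases x <;> rfl
  right_inv p := rfl

noncomputable
def k2Equiv {n : ℕ} (G : SimpleGraph (Fin n)) :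
    (K2 →g G) ≃ {p : Fin n × Fin n // G.Adj p.1 p.2} where
  toFun f := ⟨(f 0, f 1), f.map_rel (by decide)⟩
  invFun p := ⟨![p.1.1, p.1.2], by
    intro a b hab
    have h1 := p.2
    fin_cases a <;> fin_cases b <;>
      first
        | exact absurd hab (by decide)
        | (simp only [Matrix.cons_val', Matrix.cons_val_zero, Matrix.cons_val_one,
            Matrix.head_cons, Matrix.cons_val_fin_one, Matrix.cons_val_succ]
           first | exact h1 | exact h1.symm)⟩
  left_inv f := by ext x; fin_cases x <;> rfl
  right_inv p := rfl

open Finset in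
lemma homCount_C4 {n : ℕ} (G : SimpleGraph (Fin n)) [DecidableRel G.Adj] :
    Nat.card (C4 →g G) =
      ∑ u : Fin n, ∑ v : Fin n, (univ.filter (fun w => G.Adj u w ∧ G.Adj v w)).card ^ 2 := by
  classical
  rw [Nat.card_congr (c4Equiv G), Nat.card_eq_fintype_card, Fintype.card_sigma]
  rw [← Fintype.sum_prod_type']
  congr 1
  ext ⟨u, v⟩
  rw [Fintype.card_prod, Fintype.card_subtype, sq]

open Finset in
lemma homCount_K2 {n : ℕ} (G : SimpleGraph (Fin n)) [DecidableRel G.Adj] :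
    Nat.card (K2 →g G) =
      ∑ u : Fin n, ∑ v : Fin n, if G.Adj u v then 1 else 0 := by
  classical
  rw [Nat.card_congr (k2Equiv G), Nat.card_eq_fintype_card, Fintype.card_subtype]
  rw [Finset.card_filter, ← Fintype.sum_prod_type']


set_option maxHeartbeats 1000000 in
open Finset in
/-- No finite graph attains the minimum 4-cycle density among graphs of edge density at
least `1/2`: if `t(K₂, G) ≥ 1/2` then `t(C₄, G) > 1/16`. -/
theorem no_finite_graph_attains_min {n : ℕ} (hn : 0 < n) (G : SimpleGraph (Fin n))
    (h : homDensity K2 G ≥ 1/2) :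
    homDensity C4 G > 1/16 := by
  classical
  set N : ℝ := (n : ℝ) with hN
  have hN1 : (1:ℝ) ≤ N := by rw [hN]; exact_mod_cast hn
  have hN0 : (0:ℝ) < N := by linarith
  set a : Fin n → Fin n → ℝ := fun u v => if G.Adj u v then 1 else 0 with ha
  set c : Fin n → Fin n → ℝ := fun u v => ∑ w, a u w * a v w with hc
  set deg : Fin n → ℝ := fun u => ∑ w, a u w with hdeg
  set d : ℝ := ∑ u, deg u with hd
  set S : ℝ := ∑ w, (deg w)^2 with hS
  set T : ℝ := ∑ u, (deg u - N/4)^2 with hT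
  have hcol : ∀ w : Fin n, (∑ u, a u w) = deg w := by
    intro w
    apply Finset.sum_congr rfl
    intro u _
    simp only [ha]
    rw [SimpleGraph.adj_comm]
  -- cast of C4 count
  have hC4 : (homCount C4 G : ℝ) = ∑ u, ∑ v, (c u v)^2 := by
    have key : ∀ u v : Fin n,
        ((univ.filter (fun w => G.Adj u w ∧ G.Adj v w)).card : ℝ) = c u v := by
      intro u v
      rw [Finset.card_filter]
      push_cast
      apply Finset.sum_congr rfl
      intro w _
      by_cases h1 : G.Adj u w <;> by_cases h2 : G.Adj v w <;> simp [ha, h1, h2]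
    rw [homCount, homCount_C4]
    push_cast
    exact Finset.sum_congr rfl fun u _ => Finset.sum_congr rfl fun v _ => by
      rw [key u v]
  -- cast of K2 count
  have hK2 : (homCount K2 G : ℝ) = d := by
    rw [homCount, homCount_K2]
    push_cast
    apply Finset.sum_congr rfl
    intro u _
    apply Finset.sum_congr rfl
    intro v _
    simp [ha]
  -- c u u = deg u
  have hcc : ∀ u, c u u = deg u := by
    intro u
    apply Finset.sum_congr rfl
    intro w _
    by_cases h1 : G.Adj u w <;> simp [ha, h1]
  -- total sum of c equals S
  have hsum_c : ∑ u, ∑ v, c u v = S := by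
    calc ∑ u, ∑ v, c u v
        = ∑ u, ∑ w, ∑ v, a u w * a v w :=
          Finset.sum_congr rfl fun u _ => Finset.sum_comm
      _ = ∑ u, ∑ w, a u w * deg w := by
          apply Finset.sum_congr rfl
          intro u _
          apply Finset.sum_congr rfl
          intro w _
          rw [← Finset.mul_sum, hcol w]
      _ = ∑ w, ∑ u, a u w * deg w := Finset.sum_comm
      _ = ∑ w, (deg w)^2 := by
          apply Finset.sum_congr rfl
          intro w _
          rw [← Finset.sum_mul, hcol w, sq]
  -- pointwise lower bound
  have hpt : ∀ u v : Fin n,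
      (N/2) * c u v - N^2/16 + (if u = v then (c u v - N/4)^2 else 0) ≤ (c u v)^2 := by
    intro u v
    split_ifs with hu
    · nlinarith [sq_nonneg (c u v - N/4)]
    · nlinarith [sq_nonneg (c u v - N/4)]
  -- sum lower bound
  have hsumlb : (N/2) * S - N^4/16 + T ≤ ∑ u, ∑ v, (c u v)^2 := by
    have expand : ∑ u, ∑ v, ((N/2) * c u v - N^2/16
        + (if u = v then (c u v - N/4)^2 else 0)) = (N/2) * S - N^4/16 + T := by
      have e1 : ∀ u : Fin n, ∑ v, ((N/2) * c u v - N^2/16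
          + (if u = v then (c u v - N/4)^2 else 0))
          = (N/2) * (∑ v, c u v) - N * N^2/16 + (deg u - N/4)^2 := by
        intro u
        rw [Finset.sum_add_distrib, Finset.sum_sub_distrib, ← Finset.mul_sum,
          Finset.sum_const, Finset.sum_ite_eq, card_univ, Fintype.card_fin]
        simp [hcc u, hN]
        ring
      rw [Finset.sum_congr rfl fun u _ => e1 u, Finset.sum_add_distrib,
        Finset.sum_sub_distrib, ← Finset.mul_sum, hsum_c, ← hT,
        Finset.sum_const, card_univ, Fintype.card_fin, nsmul_eq_mul, ← hN]
      ring
    rw [← expand]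
    exact Finset.sum_le_sum fun u _ => Finset.sum_le_sum fun v _ => hpt u v
  -- edge density bound
  have hd2 : N^2/2 ≤ d := by
    have hds := h
    rw [homDensity, ge_iff_le,
      le_div_iff₀ (by exact pow_pos (by exact_mod_cast hn) 2), hK2] at hds
    rw [hN]
    linarith
  -- Cauchy–Schwarz
  have hCS1 : d^2 ≤ N * S := by
    have := sq_sum_le_card_mul_sum_sq (s := (univ : Finset (Fin n))) (f := deg)
    rw [card_univ, Fintype.card_fin] at this
    calc d^2 = (∑ u, deg u)^2 := by rw [hd]
      _ ≤ n * ∑ u, (deg u)^2 := this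
      _ = N * S := by rw [hS, hN]
  have hCS2 : (d - N * (N/4))^2 ≤ N * T := by
    have := sq_sum_le_card_mul_sum_sq (s := (univ : Finset (Fin n)))
      (f := fun u => deg u - N/4)
    rw [card_univ, Fintype.card_fin] at this
    have e : ∑ u, (deg u - N/4) = d - N * (N/4) := by
      rw [Finset.sum_sub_distrib, Finset.sum_const, card_univ, Fintype.card_fin, ← hd,
        nsmul_eq_mul, hN]
    rw [e] at this
    exact this.trans_eq (by rw [hN, hT])
  -- wrap up
  have h9 : N^2/4 ≤ d - N * (N/4) := by linarith
  have h10 : (N^2/4)^2 ≤ (d - N * (N/4))^2 := by nlinarith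
  have hN2 : (1:ℝ) ≤ N^2 := by nlinarith
  have hN4 : (1:ℝ) ≤ N^4 := by nlinarith
  have hNT : N^4/16 ≤ N * T := by
    calc N^4/16 = (N^2/4)^2 := by ring
      _ ≤ (d - N * (N/4))^2 := h10
      _ ≤ N * T := hCS2
  have hT0 : 0 < T := by
    by_contra hle
    push_neg at hle
    have hmt : N * T ≤ 0 := mul_nonpos_of_nonneg_of_nonpos hN0.le hle
    linarith
  have h11 : N^4/4 ≤ d^2 := by
    nlinarith [sq_nonneg (d - N^2/2),
      mul_le_mul_of_nonneg_left hd2 (by positivity : (0:ℝ) ≤ N^2)]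
  have hS0 : N^4/8 ≤ (N/2) * S := by
    have h12 : N^4/4 ≤ N * S := le_trans h11 hCS1
    linarith
  rw [homDensity, hC4, gt_iff_lt, lt_div_iff₀ (by positivity)]
  have : (N:ℝ)^4 = (n:ℝ)^4 := by rw [hN]
  calc (1:ℝ)/16 * (n:ℝ)^4 = N^4/16 := by rw [hN]; ring
    _ < (N/2) * S - N^4/16 + T := by linarith
    _ ≤ ∑ u, ∑ v, (c u v)^2 := hsumlb
end
end
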